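/- arXiv:2312.10667 — 2 statements merged into one kernel-verified Lean document; each statement's English description precedes it below -/
import Mathlib

section
/- Let p be prime and a, b, m, n, s ∈ {1,...,p-1} with a ≠ b and m+n+s = p. Then the sum over k from 0 to p-1 of (a+k)^m (b+k)^n k^s is congruent to -(m·a + n·b) mod p. -/
open Finset

lemma sum_range_cast {p : ℕ} [NeZero p] {M : Type*} [AddCommMonoid M] (f : ZMod p → M) :
    ∑ k ∈ Finset.range p, f (k : ZMod p) = ∑ x : ZMod p, f x := by
  refine Finset.sum_nbij' (fun k => (k : ZMod p)) (fun x => x.val) ?_ ?_ ?_ ?_ ?_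
  · intro k hk; exact mem_univ _
  · intro x hx; exact mem_range.mpr (ZMod.val_lt x)
  · intro k hk; exact ZMod.val_natCast_of_lt (mem_range.mp hk)
  · intro x hx; simp [ZMod.natCast_val, ZMod.cast_id]
  · intro k hk; rfl

lemma zmod_sum_pow (p t : ℕ) [hp : Fact p.Prime] (h3 : 3 ≤ p) (ht1 : 1 ≤ t) (ht2 : t ≤ p) :
    ∑ x : ZMod p, x ^ t = if t = p - 1 then -1 else 0 := by
  rcases lt_trichotomy t (p-1) with hlt | heq | hgt
  · rw [if_neg (by omega)]
    exact FiniteField.sum_pow_lt_card_sub_one (K := ZMod p) t (by rwa [ZMod.card])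
  · subst heq
    rw [if_pos rfl]
    rw [← Finset.add_sum_erase _ _ (Finset.mem_univ (0 : ZMod p))]
    rw [zero_pow (by omega)]
    have h1 : ∀ x ∈ Finset.univ.erase (0 : ZMod p), x ^ (p-1) = 1 := fun x hx =>
      ZMod.pow_card_sub_one_eq_one (Finset.ne_of_mem_erase hx)
    rw [Finset.sum_congr rfl h1, Finset.sum_const, Finset.card_erase_of_mem (Finset.mem_univ _)]
    simp only [Finset.card_univ, ZMod.card, nsmul_eq_mul, mul_one, zero_add]
    rw [Nat.cast_sub (by omega), ZMod.natCast_self, Nat.cast_one, zero_sub]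
  · have htp : t = p := by omega
    rw [if_neg (by omega)]
    have h1 : ∀ x : ZMod p, x ^ t = x ^ 1 := by intro x; rw [htp, ZMod.pow_card, pow_one]
    rw [Finset.sum_congr rfl (fun x _ => h1 x)]
    exact FiniteField.sum_pow_lt_card_sub_one (K := ZMod p) 1 (by rw [ZMod.card]; omega)

theorem triple_product_sum_p (p a b m n s : ℕ) (hp : p.Prime)
    (ha : 1 ≤ a ∧ a ≤ p - 1) (hb : 1 ≤ b ∧ b ≤ p - 1) (hab : a ≠ b)
    (hm : 1 ≤ m ∧ m ≤ p - 1) (hn : 1 ≤ n ∧ n ≤ p - 1) (hs : 1 ≤ s ∧ s ≤ p - 1)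
    (h : m + n + s = p) :
    (∑ k ∈ Finset.range p,
        ((a : ZMod p) + (k : ZMod p)) ^ m * ((b : ZMod p) + (k : ZMod p)) ^ n *
          (k : ZMod p) ^ s) =
      -((m : ZMod p) * (a : ZMod p) + (n : ZMod p) * (b : ZMod p)) := by
  haveI : Fact p.Prime := ⟨hp⟩
  have h3 : 3 ≤ p := by omega
  haveI : NeZero p := ⟨by omega⟩
  set c : ℕ → ℕ → ZMod p := fun i j =>
    (a : ZMod p) ^ i * (m.choose i : ZMod p) * ((b : ZMod p) ^ j * (n.choose j : ZMod p)) with hc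
  rw [sum_range_cast (fun x => ((a : ZMod p) + x) ^ m * ((b : ZMod p) + x) ^ n * x ^ s)]
  have key : ∀ x : ZMod p, ((a : ZMod p) + x) ^ m * ((b : ZMod p) + x) ^ n * x ^ s
      = ∑ i ∈ range (m+1), ∑ j ∈ range (n+1), c i j * x ^ (m - i + (n - j + s)) := by
    intro x
    rw [add_pow, add_pow, Finset.sum_mul_sum, Finset.sum_mul]
    refine Finset.sum_congr rfl fun i hi => ?_
    rw [Finset.sum_mul]
    refine Finset.sum_congr rfl fun j hj => ?_
    rw [hc, pow_add, pow_add]; ring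
  rw [Finset.sum_congr rfl (fun x _ => key x), Finset.sum_comm]
  have step : ∀ i ∈ range (m+1),
      (∑ x : ZMod p, ∑ j ∈ range (n+1), c i j * x ^ (m - i + (n - j + s)))
      = ∑ j ∈ range (n+1), c i j * (if m - i + (n - j + s) = p - 1 then -1 else 0) := by
    intro i hi
    rw [Finset.sum_comm]
    refine Finset.sum_congr rfl fun j hj => ?_
    rw [← Finset.mul_sum, zmod_sum_pow p _ h3 (by omega)
      (by simp only [mem_range] at hi hj; omega)]
  rw [Finset.sum_congr rfl step]
  have step2 : ∀ i ∈ range (m+1), ∀ j ∈ range (n+1),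
      c i j * (if m - i + (n - j + s) = p - 1 then (-1 : ZMod p) else 0)
      = (if i = 0 ∧ j = 1 then -((n : ZMod p) * b) else 0)
        + (if i = 1 ∧ j = 0 then -((m : ZMod p) * a) else 0) := by
    intro i hi j hj
    simp only [mem_range, Nat.lt_succ_iff] at hi hj
    have hcond : (m - i + (n - j + s) = p - 1) ↔ i + j = 1 := by omega
    simp only [hcond, mul_ite, mul_neg_one, mul_zero]
    by_cases h1 : i + j = 1
    · rw [if_pos h1]
      rcases (by omega : (i = 0 ∧ j = 1) ∨ (i = 1 ∧ j = 0)) with ⟨rfl, rfl⟩ | ⟨rfl, rfl⟩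
      · rw [if_pos ⟨rfl, rfl⟩, if_neg (by omega), hc]
        simp [Nat.choose_one_right]; ring
      · rw [if_neg (by omega), if_pos ⟨rfl, rfl⟩, hc]
        simp [Nat.choose_one_right]; ring
    · rw [if_neg h1, if_neg (by omega), if_neg (by omega)]; simp
  rw [Finset.sum_congr rfl (fun i hi => Finset.sum_congr rfl (step2 i hi))]
  simp only [Finset.sum_add_distrib]
  have e1 : (∑ i ∈ range (m+1), ∑ j ∈ range (n+1),
      if i = 0 ∧ j = 1 then -((n : ZMod p) * b) else 0) = -((n : ZMod p) * b) := by
    rw [Finset.sum_eq_single 0]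
    · simp only [true_and, eq_self_iff_true]
      rw [Finset.sum_eq_single 1]
      · simp
      · intro j hj hj1; simp [hj1]
      · intro habs; exact absurd (Finset.mem_range.mpr (by omega)) habs
    · intro i hi hi0
      apply Finset.sum_eq_zero; intro j hj; simp [hi0]
    · intro habs; exact absurd (Finset.mem_range.mpr (by omega)) habs
  have e2 : (∑ i ∈ range (m+1), ∑ j ∈ range (n+1),
      if i = 1 ∧ j = 0 then -((m : ZMod p) * a) else 0) = -((m : ZMod p) * a) := by
    rw [Finset.sum_eq_single 1]
    · simp only [true_and, eq_self_iff_true]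
      rw [Finset.sum_eq_single 0]
      · simp
      · intro j hj hj1; simp [hj1]
      · intro habs; exact absurd (Finset.mem_range.mpr (by omega)) habs
    · intro i hi hi0
      apply Finset.sum_eq_zero; intro j hj; simp [hi0]
    · intro habs; exact absurd (Finset.mem_range.mpr (by omega)) habs
  rw [e1, e2]; ring
end

section
/- Let p be prime and a, b, m, n, s ∈ {1,...,p-1} with a ≠ b, and suppose p-1 ≤ m+n+s < 2(p-1). Set M = m+n+s-(p-1). Then the sum over k from 0 to p-1 of (a+k)^m (b+k)^n k^s is congruent mod p to -∑_{j=0}^{M} C(m, M-j) C(n, j) a^(M-j) b^j. -/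
lemma sum_pow_zmod (p t : ℕ) [NeZero p] (hp : p.Prime) (ht1 : 1 ≤ t) (ht2 : t < 2 * (p - 1)) :
    (∑ x : ZMod p, x ^ t) = if t = p - 1 then -1 else 0 := by
  haveI := Fact.mk hp
  classical
  have hq : Fintype.card (ZMod p) = p := ZMod.card p
  have h0 : (∑ x : ZMod p, x ^ t) = ∑ x ∈ Finset.univ.erase (0 : ZMod p), x ^ t :=
    (Finset.sum_erase _ (by simp [zero_pow (by omega : t ≠ 0)])).symm
  let φ : (ZMod p)ˣ ↪ ZMod p := ⟨fun x => x, fun _ _ h => Units.ext h⟩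
  have hmap : Finset.univ.map φ = Finset.univ.erase (0 : ZMod p) := by
    ext x
    simp only [Finset.mem_map, Finset.mem_univ, Function.Embedding.coeFn_mk, true_and,
      Finset.mem_erase, and_true, φ]; exact isUnit_iff_ne_zero
  have h1 : (∑ x : ZMod p, x ^ t) = ∑ u : (ZMod p)ˣ, ((u : ZMod p)) ^ t := by
    rw [h0, ← hmap, Finset.sum_map]; rfl
  rw [h1]
  have h2 := FiniteField.sum_pow_units (ZMod p) t
  rw [hq] at h2
  rw [h2]
  congr 1
  ext
  constructor
  · intro h
    have hp1 : 1 ≤ p - 1 := by have := hp.two_le; omega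
    rcases h with ⟨c, hc⟩
    have hc2 : c < 2 := by
      by_contra h'
      push_neg at h'
      have := Nat.mul_le_mul_left (p - 1) h'
      omega
    interval_cases c <;> omega
  · intro h; exact ⟨1, by omega⟩


section
variable (p : ℕ)

lemma sum_range_zmod [NeZero p] {β : Type*} [AddCommMonoid β] (f : ZMod p → β) :
    ∑ k ∈ Finset.range p, f k = ∑ x : ZMod p, f x := by
  refine Finset.sum_nbij' (fun k => (k : ZMod p)) (fun x => x.val) ?_ ?_ ?_ ?_ ?_
  · intro k hk; exact Finset.mem_univ _
  · intro x _; exact Finset.mem_range.2 x.val_lt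
  · intro k hk; exact ZMod.val_cast_of_lt (Finset.mem_range.1 hk)
  · intro x _; exact ZMod.natCast_rightInverse x
  · intro k _; rfl

end

theorem triple_product_mid (p a b m n s M : ℕ) (hp : p.Prime)
    (ha : 1 ≤ a ∧ a ≤ p - 1) (hb : 1 ≤ b ∧ b ≤ p - 1) (hab : a ≠ b)
    (hm : 1 ≤ m ∧ m ≤ p - 1) (hn : 1 ≤ n ∧ n ≤ p - 1) (hs : 1 ≤ s ∧ s ≤ p - 1)
    (h1 : p - 1 ≤ m + n + s) (h2 : m + n + s < 2 * (p - 1))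
    (hM : (M : ℤ) = (m : ℤ) + n + s - ((p : ℤ) - 1)) :
    (∑ k ∈ Finset.range p,
        ((a : ZMod p) + (k : ZMod p)) ^ m * ((b : ZMod p) + (k : ZMod p)) ^ n *
          (k : ZMod p) ^ s) =
      -∑ j ∈ Finset.range (M + 1),
          (m.choose (M - j) : ZMod p) * (n.choose j : ZMod p) *
            (a : ZMod p) ^ (M - j) * (b : ZMod p) ^ j := by
  haveI := Fact.mk hp
  classical
  have hp2 := hp.two_le
  set A : ZMod p := (a : ZMod p) with hA
  set B : ZMod p := (b : ZMod p) with hB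
  set F : ℕ → ℕ → ZMod p :=
    fun i j => (m.choose i : ZMod p) * (n.choose j : ZMod p) * A ^ i * B ^ j with hF
  -- step 1 : convert to sum over ZMod p
  rw [sum_range_zmod p (fun x => (A + x) ^ m * (B + x) ^ n * x ^ s)]
  -- step 2 : binomial expansion
  have step2 : (∑ x : ZMod p, (A + x) ^ m * (B + x) ^ n * x ^ s)
      = ∑ i ∈ Finset.range (m + 1), ∑ j ∈ Finset.range (n + 1),
          F i j * ∑ x : ZMod p, x ^ ((m - i) + (n - j) + s) := by
    have expand : ∀ x : ZMod p, (A + x) ^ m * (B + x) ^ n * x ^ s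
        = ∑ i ∈ Finset.range (m + 1), ∑ j ∈ Finset.range (n + 1),
            F i j * x ^ ((m - i) + (n - j) + s) := by
      intro x
      rw [add_pow, add_pow, Finset.sum_mul_sum, Finset.sum_mul]
      refine Finset.sum_congr rfl fun i _ => ?_
      rw [Finset.sum_mul]
      refine Finset.sum_congr rfl fun j _ => ?_
      rw [hF, pow_add, pow_add]
      ring
    simp_rw [expand]
    rw [Finset.sum_comm]
    refine Finset.sum_congr rfl fun i _ => ?_
    rw [Finset.sum_comm]
    refine Finset.sum_congr rfl fun j _ => ?_
    rw [← Finset.mul_sum]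
  rw [step2]
  -- step 3 : evaluate inner power sums
  have step3 : (∑ i ∈ Finset.range (m + 1), ∑ j ∈ Finset.range (n + 1),
          F i j * ∑ x : ZMod p, x ^ ((m - i) + (n - j) + s))
      = ∑ i ∈ Finset.range (m + 1), ∑ j ∈ Finset.range (n + 1),
          (if i + j = M then -F i j else 0) := by
    refine Finset.sum_congr rfl fun i hi => Finset.sum_congr rfl fun j hj => ?_
    have hi' := Finset.mem_range.1 hi
    have hj' := Finset.mem_range.1 hj
    rw [sum_pow_zmod p _ hp (by omega) (by omega)]
    have hcond : ((m - i) + (n - j) + s = p - 1) ↔ (i + j = M) := by omega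
    by_cases h : i + j = M
    · rw [if_pos ((hcond).2 h), if_pos h, mul_neg_one]
    · rw [if_neg (fun hc => h (hcond.1 hc)), if_neg h, mul_zero]
  rw [step3]
  -- step 4 : collapse inner sum
  have step4 : (∑ i ∈ Finset.range (m + 1), ∑ j ∈ Finset.range (n + 1),
          (if i + j = M then -F i j else 0))
      = ∑ j ∈ Finset.range (n + 1), (if j ≤ M then -F (M - j) j else 0) := by
    rw [Finset.sum_comm]
    refine Finset.sum_congr rfl fun j hj => ?_
    by_cases h : j ≤ M
    · have : ∀ i, i + j = M ↔ i = M - j := fun i => by omega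
      simp_rw [this]
      rw [Finset.sum_ite_eq' (Finset.range (m + 1)) (M - j) (fun i => -F i j)]
      by_cases hmem : M - j ∈ Finset.range (m + 1)
      · rw [if_pos hmem, if_pos h]
      · rw [if_neg hmem, if_pos h]
        have : m < M - j := by
          have := Finset.mem_range.not.1 hmem
          omega
        simp [hF, Nat.choose_eq_zero_of_lt this]
    · have : ∀ i ∈ Finset.range (m + 1), (if i + j = M then -F i j else 0) = 0 := by
        intro i _
        rw [if_neg (by omega)]
      rw [Finset.sum_congr rfl this, Finset.sum_const_zero, if_neg h]
  rw [step4]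
  -- step 5 : change range to M+1
  have hMn : M ≤ m + n := by omega
  set N := max n M with hN
  have key : ∀ j, j > n → (if j ≤ M then -F (M - j) j else 0) = 0 := by
    intro j hjn
    by_cases h : j ≤ M
    · rw [if_pos h]; simp [hF, Nat.choose_eq_zero_of_lt hjn]
    · rw [if_neg h]
  have e1 : (∑ j ∈ Finset.range (n + 1), (if j ≤ M then -F (M - j) j else 0))
      = ∑ j ∈ Finset.range (N + 1), (if j ≤ M then -F (M - j) j else 0) := by
    refine Finset.sum_subset (Finset.range_subset_range.2 (by omega)) ?_
    intro j _ hj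
    exact key j (by have := Finset.mem_range.not.1 hj; omega)
  have e2 : (∑ j ∈ Finset.range (M + 1), (if j ≤ M then -F (M - j) j else 0))
      = ∑ j ∈ Finset.range (N + 1), (if j ≤ M then -F (M - j) j else 0) := by
    refine Finset.sum_subset (Finset.range_subset_range.2 (by omega)) ?_
    intro j _ hj
    rw [if_neg (by have := Finset.mem_range.not.1 hj; omega)]
  rw [e1, ← e2]
  have e3 : (∑ j ∈ Finset.range (M + 1), (if j ≤ M then -F (M - j) j else 0))
      = ∑ j ∈ Finset.range (M + 1), -F (M - j) j := by
    refine Finset.sum_congr rfl fun j hj => ?_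
    rw [if_pos (by have := Finset.mem_range.1 hj; omega)]
  rw [e3, ← Finset.sum_neg_distrib]
end
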